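/- arXiv:2008.00294 — 3 statements merged into one kernel-verified Lean document; each statement's English description precedes it below -/
import Mathlib

section
/- Let γ,δ ≥ 0 and u = v^{γ,δ}. The function f(x) = x·log|x| for x ≠ 0, f(0) = 0, satisfies ‖f u‖_∞ < ∞ and sup_{t>0} Ω²_φ(f,t)_u / t < ∞ (so f ∈ Z_1(u)), but f′(x) φ(x) u(x) is unbounded on (−1,1)∖{0} (so f ∉ W_1(u)); in particular the inequality ‖f′ uφ‖_∞ ≤ C‖f‖_{Z_1(u)} cannot hold for any constant C, i.e. the differentiation inequality ‖f′‖_{Z_{r−1}(uφ)} ≤ C‖f‖_{Z_r(u)} fails for r = 1. -/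
open Set Filter MeasureTheory intervalIntegral Polynomial
open scoped ENNReal

noncomputable section

/-- Jacobi weight `v^{a,b}(x) = (1-x)^a (1+x)^b`. -/
def jw (a b : ℝ) : ℝ → ℝ := fun x => (1 - x) ^ a * (1 + x) ^ b

/-- `φ(x) = √(1-x²)`. -/
def phiw : ℝ → ℝ := fun x => Real.sqrt (1 - x ^ 2)

/-- Weighted sup ("uniform") norm `‖g w‖_∞` over `(-1,1)`, valued in `ℝ≥0∞`. -/
def wnorm (w g : ℝ → ℝ) : ℝ≥0∞ := ⨆ x ∈ Ioo (-1 : ℝ) 1, ENNReal.ofReal |g x * w x|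

/-- Membership in the space `C_w`: continuity on `(-1,1)` together with the
endpoint conditions (`(gw)(x) → 0` at an endpoint where `w` vanishes, continuous
extendability at an endpoint where `w` does not vanish). -/
def memC (w g : ℝ → ℝ) : Prop :=
  ContinuousOn g (Ioo (-1 : ℝ) 1) ∧
  (w 1 = 0 → Tendsto (fun x => g x * w x) (nhdsWithin 1 (Iio (1 : ℝ))) (nhds 0)) ∧
  (w 1 ≠ 0 → ∃ L, Tendsto g (nhdsWithin 1 (Iio (1 : ℝ))) (nhds L)) ∧
  (w (-1) = 0 → Tendsto (fun x => g x * w x) (nhdsWithin (-1) (Ioi (-1 : ℝ))) (nhds 0)) ∧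
  (w (-1) ≠ 0 → ∃ L, Tendsto g (nhdsWithin (-1) (Ioi (-1 : ℝ))) (nhds L))

/-- The symmetric difference `Δ^k_{τφ} g(x)`. -/
def Dk (k : ℕ) (τ : ℝ) (g : ℝ → ℝ) (x : ℝ) : ℝ :=
  ∑ i ∈ Finset.range (k + 1),
    (-1 : ℝ) ^ i * (k.choose i : ℝ) * g (x + τ * phiw x / 2 * ((k : ℝ) - 2 * i))

/-- Main part of the φ-modulus of smoothness `Ω^k_φ(g,t)_w`. -/
def Om (k : ℕ) (w g : ℝ → ℝ) (t : ℝ) : ℝ≥0∞ :=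
  ⨆ (τ : ℝ) (_ : τ ∈ Ioc (0 : ℝ) t),
    ⨆ (x : ℝ) (_ : x ∈ Icc (-1 + (2 * (k : ℝ) * τ) ^ 2) (1 - (2 * (k : ℝ) * τ) ^ 2)),
      ENNReal.ofReal (w x * |Dk k τ g x|)

/-- Zygmund seminorm of order `r` built with the `k`-th modulus:
`sup_{t>0} Ω^k_φ(g,t)_w / t^r`. -/
def ZS (r : ℝ) (k : ℕ) (w g : ℝ → ℝ) : ℝ≥0∞ :=
  ⨆ (t : ℝ) (_ : 0 < t), Om k w g t / ENNReal.ofReal (t ^ r)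

/-- Zygmund norm `‖g‖_{Z_r(w)}` (with `k = ⌊r⌋ + 1`). -/
def Zn (r : ℝ) (w g : ℝ → ℝ) : ℝ≥0∞ := wnorm w g + ZS r (⌊r⌋ + 1).toNat w g

/-- Membership in the Zygmund space `Z_r(w)`. -/
def memZ (r : ℝ) (w g : ℝ → ℝ) : Prop := memC w g ∧ Zn r w g < ⊤

/-- Weighted error of best polynomial approximation `E_m(g)_w`. -/
def Eerr (m : ℕ) (w g : ℝ → ℝ) : ℝ≥0∞ :=
  ⨅ (P : Polynomial ℝ) (_ : P.natDegree ≤ m), wnorm w (fun x => g x - P.eval x)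

/-- Unweighted error of best uniform polynomial approximation on `[-1,1]`. -/
def EerrI (m : ℕ) (g : ℝ → ℝ) : ℝ≥0∞ :=
  ⨅ (P : Polynomial ℝ) (_ : P.natDegree ≤ m),
    ⨆ x ∈ Icc (-1 : ℝ) 1, ENNReal.ofReal |g x - P.eval x|

/-! ### Auxiliary lemmas -/

lemma abs_sub_abs_add' (a b : ℝ) : |a - b| ≤ |a| + |b| := by
  rw [sub_eq_add_neg]
  exact (abs_add_le _ _).trans (by rw [abs_neg])

lemma xlog_le_one {t : ℝ} (h : |t| ≤ 1) : |t * Real.log t| ≤ 1 := by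
  rcases eq_or_ne t 0 with rfl | ht
  · simp
  · have h0 : 0 < |t| := abs_pos.2 ht
    have hlog : Real.log t = Real.log |t| := (Real.log_abs t).symm
    have h1 : Real.log |t| ≤ 0 := Real.log_nonpos (abs_nonneg t) h
    have h2 : Real.log |t|⁻¹ ≤ |t|⁻¹ - 1 := Real.log_le_sub_one_of_pos (by positivity)
    rw [Real.log_inv] at h2
    rw [abs_mul, hlog, abs_of_nonpos h1]
    have h3 : -Real.log |t| ≤ |t|⁻¹ - 1 := by linarith
    calc |t| * -Real.log |t| ≤ |t| * (|t|⁻¹ - 1) := by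
          exact mul_le_mul_of_nonneg_left h3 (le_of_lt h0)
      _ = 1 - |t| := by field_simp
      _ ≤ 1 := by linarith

lemma xlog_le_twelve {t : ℝ} (h : |t| ≤ 4) : |t * Real.log t| ≤ 12 := by
  rcases le_or_gt |t| 1 with h1 | h1
  · linarith [xlog_le_one h1]
  · have hlog : Real.log t = Real.log |t| := (Real.log_abs t).symm
    have h2 : Real.log |t| ≤ |t| - 1 := Real.log_le_sub_one_of_pos (by linarith)
    have h3 : 0 ≤ Real.log |t| := Real.log_nonneg h1.le
    rw [abs_mul, hlog, abs_of_nonneg h3]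
    nlinarith

lemma log_one_add_le {u : ℝ} (h : |u| ≤ 1/3) : |Real.log (1+u)| ≤ 2 * |u| := by
  have hu1 : -(1/3) ≤ u := neg_le_of_abs_le h
  have hu2 : u ≤ 1/3 := le_of_abs_le h
  have hp : (0:ℝ) < 1 + u := by linarith
  have h1 : Real.log (1+u) ≤ u := by
    have := Real.log_le_sub_one_of_pos hp; linarith
  have h2 : Real.log (1+u)⁻¹ ≤ (1+u)⁻¹ - 1 := Real.log_le_sub_one_of_pos (by positivity)
  rw [Real.log_inv] at h2
  have h3 : (1+u)⁻¹ - 1 = -u / (1+u) := by field_simp; ring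
  have h4 : -Real.log (1+u) ≤ -u/(1+u) := by linarith
  have h5 : -u/(1+u) ≤ 2 * |u| := by
    rw [div_le_iff₀ hp]
    have : |u| * 1 ≤ |u| * (2 * (1+u)) := by
      apply mul_le_mul_of_nonneg_left _ (abs_nonneg u); linarith
    nlinarith [neg_le_abs u, abs_nonneg u]
  rw [abs_le]; constructor
  · linarith
  · nlinarith [le_abs_self u, abs_nonneg u]

lemma Fbound (y : ℝ) :
    |(y+1)*Real.log (y+1) - 2*(y*Real.log y) + (y-1)*Real.log (y-1)| ≤ 48 := by
  rcases le_or_gt |y| 3 with hy | hy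
  · have h1 : |(y+1) * Real.log (y+1)| ≤ 12 :=
      xlog_le_twelve (by cases abs_le.1 hy; rw [abs_le]; constructor <;> linarith)
    have h2 : |y * Real.log y| ≤ 12 := xlog_le_twelve (by linarith)
    have h3 : |(y-1) * Real.log (y-1)| ≤ 12 :=
      xlog_le_twelve (by cases abs_le.1 hy; rw [abs_le]; constructor <;> linarith)
    calc |(y+1)*Real.log (y+1) - 2*(y*Real.log y) + (y-1)*Real.log (y-1)|
        ≤ |(y+1)*Real.log (y+1)| + 2*|y*Real.log y| + |(y-1)*Real.log (y-1)| := by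
          have i1 := abs_add_le ((y+1)*Real.log (y+1) - 2*(y*Real.log y)) ((y-1)*Real.log (y-1))
          have i2 : |(y+1)*Real.log (y+1) - 2*(y*Real.log y)| ≤
              |(y+1)*Real.log (y+1)| + |2*(y*Real.log y)| :=
            abs_sub_abs_add' (((y+1))*Real.log (y+1)) (2*(y*Real.log y))
          have i3 : |2*(y*Real.log y)| = 2 * |y*Real.log y| := by rw [abs_mul]; norm_num
          linarith
      _ ≤ 48 := by linarith
  · have hy0 : y ≠ 0 := by intro h; rw [h] at hy; simp at hy; linarith
    have hya : (0:ℝ) < |y| := by linarith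
    have hinv : |1/y| ≤ 1/3 := by
      rw [abs_div, abs_one, div_le_div_iff₀ hya (by norm_num)]; linarith
    have e1 : y + 1 = y * (1 + 1/y) := by field_simp
    have e2 : y - 1 = y * (1 + (-1)/y) := by field_simp; ring
    have hn1 : (1 : ℝ) + 1/y ≠ 0 := by
      have := neg_le_of_abs_le hinv; have := le_of_abs_le hinv; intro h; nlinarith
    have hn2 : (1 : ℝ) + (-1)/y ≠ 0 := by
      have h1 : |(-1)/y| ≤ 1/3 := by
        rw [abs_div, abs_neg, abs_one]; rw [abs_div, abs_one] at hinv; exact hinv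
      have := neg_le_of_abs_le h1; have := le_of_abs_le h1; intro h; nlinarith
    have l1 : Real.log (y+1) = Real.log y + Real.log (1 + 1/y) := by
      rw [e1, Real.log_mul hy0 hn1]
    have l2 : Real.log (y-1) = Real.log y + Real.log (1 + (-1)/y) := by
      rw [e2, Real.log_mul hy0 hn2]
    have b1 : |Real.log (1 + 1/y)| ≤ 2 * |1/y| := log_one_add_le hinv
    have b2 : |Real.log (1 + (-1)/y)| ≤ 2 * |(-1)/y| := by
      apply log_one_add_le; rw [abs_div, abs_neg, abs_one]
      rw [abs_div, abs_one] at hinv; exact hinv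
    have key : (y+1)*Real.log (y+1) - 2*(y*Real.log y) + (y-1)*Real.log (y-1)
        = (y+1)*Real.log (1 + 1/y) + (y-1)*Real.log (1 + (-1)/y) := by
      rw [l1, l2]; ring
    rw [key]
    have habs : |(-1)/y| = 1/|y| := by rw [abs_div, abs_neg, abs_one]
    have habs2 : |1/y| = 1/|y| := by rw [abs_div, abs_one]
    have t1 : |(y+1)*Real.log (1 + 1/y)| ≤ (|y|+1) * (2 * (1/|y|)) := by
      rw [abs_mul]
      apply mul_le_mul (by have := abs_add_le y 1; simpa using this)
        (by rw [← habs2]; exact b1) (abs_nonneg _) (by positivity)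
    have t2 : |(y-1)*Real.log (1 + (-1)/y)| ≤ (|y|+1) * (2 * (1/|y|)) := by
      rw [abs_mul]
      apply mul_le_mul (by have := abs_sub_abs_add' y 1; simpa using this)
        (by rw [← habs]; exact b2) (abs_nonneg _) (by positivity)
    have hfin : (|y|+1) * (2 * (1/|y|)) ≤ 3 := by
      have he : (|y|+1) * (2 * (1/|y|)) = 2*(|y|+1)/|y| := by field_simp
      rw [he, div_le_iff₀ hya]; nlinarith
    calc |(y+1)*Real.log (1 + 1/y) + (y-1)*Real.log (1 + (-1)/y)|
        ≤ |(y+1)*Real.log (1 + 1/y)| + |(y-1)*Real.log (1 + (-1)/y)| := abs_add_le _ _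
      _ ≤ 48 := by linarith

lemma scale_xlog {h : ℝ} (hh : 0 < h) (s : ℝ) :
    (h*s) * Real.log (h*s) = (h*s) * Real.log h + h * (s * Real.log s) := by
  rcases eq_or_ne s 0 with rfl | hs
  · simp
  · rw [Real.log_mul (ne_of_gt hh) hs]; ring

lemma key_xlog (x : ℝ) {h : ℝ} (hh : 0 ≤ h) :
    |(x+h)*Real.log (x+h) - 2*(x*Real.log x) + (x-h)*Real.log (x-h)| ≤ 48 * h := by
  rcases eq_or_lt_of_le hh with rfl | hpos
  · have : (x+0)*Real.log (x+0) - 2*(x*Real.log x) + (x-0)*Real.log (x-0) = 0 := by ring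
    rw [this, abs_zero]; norm_num
  · set y := x / h with hy
    have hx : x = h * y := by rw [hy]; field_simp
    have e1 : x + h = h * (y + 1) := by rw [hx]; ring
    have e2 : x - h = h * (y - 1) := by rw [hx]; ring
    have expand : (x+h)*Real.log (x+h) - 2*(x*Real.log x) + (x-h)*Real.log (x-h)
        = h * ((y+1)*Real.log (y+1) - 2*(y*Real.log y) + (y-1)*Real.log (y-1)) := by
      rw [e1, e2, hx, scale_xlog hpos (y+1), scale_xlog hpos y, scale_xlog hpos (y-1)]
      ring
    rw [expand, abs_mul, abs_of_pos hpos, mul_comm (48:ℝ) h]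
    exact mul_le_mul_of_nonneg_left (Fbound y) hh

lemma Dk_two (τ : ℝ) (g : ℝ → ℝ) (x : ℝ) :
    Dk 2 τ g x = g (x + τ * phiw x) - 2 * g x + g (x - τ * phiw x) := by
  simp [Dk, Finset.sum_range_succ]
  norm_num
  ring_nf

lemma deriv_xlog {x : ℝ} (hx : x ≠ 0) :
    deriv (fun y : ℝ => y * Real.log y) x = Real.log x + 1 := by
  have h : HasDerivAt (fun y : ℝ => y * Real.log y) (1 * Real.log x + x * x⁻¹) x :=
    (hasDerivAt_id x).mul (Real.hasDerivAt_log hx)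
  rw [h.deriv]; field_simp

lemma jw_le {γ δ x : ℝ} (hγ : 0 ≤ γ) (hδ : 0 ≤ δ) (hx : x ∈ Ioo (-1:ℝ) 1) :
    jw γ δ x ≤ 2^γ * 2^δ := by
  obtain ⟨h1, h2⟩ := hx
  exact mul_le_mul (Real.rpow_le_rpow (by linarith) (by linarith) hγ)
    (Real.rpow_le_rpow (by linarith) (by linarith) hδ)
    (Real.rpow_nonneg (by linarith) _) (Real.rpow_nonneg (by norm_num) _)

lemma jw_nonneg {γ δ x : ℝ} (hx : x ∈ Ioo (-1:ℝ) 1) : 0 ≤ jw γ δ x := by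
  obtain ⟨h1, h2⟩ := hx
  exact mul_nonneg (Real.rpow_nonneg (by linarith) _) (Real.rpow_nonneg (by linarith) _)

lemma phiw_nonneg (x : ℝ) : 0 ≤ phiw x := Real.sqrt_nonneg _

lemma phiw_le_one (x : ℝ) : phiw x ≤ 1 :=
  Real.sqrt_le_one.2 (by nlinarith [sq_nonneg x])

lemma jw_phiw_lb {γ δ x : ℝ} (hγ : 0 ≤ γ) (hδ : 0 ≤ δ) (hx0 : 0 < x) (hxh : x ≤ 1/2) :
    (1/2:ℝ)^γ * (1/2) ≤ jw γ δ x * phiw x := by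
  have a1 : (1/2:ℝ)^γ ≤ (1-x)^γ := Real.rpow_le_rpow (by norm_num) (by linarith) hγ
  have a2 : (1:ℝ) ≤ (1+x)^δ := Real.one_le_rpow (by linarith) hδ
  have a3 : (1/2:ℝ) ≤ phiw x := by
    have h14 : (1/4:ℝ) ≤ 1 - x^2 := by nlinarith
    have := Real.sqrt_le_sqrt h14
    have h4 : Real.sqrt (1/4) = 1/2 := by
      rw [show (1/4:ℝ) = (1/2)^2 by norm_num, Real.sqrt_sq (by norm_num)]
    rw [h4] at this; exact this
  have n1 : (0:ℝ) ≤ (1/2:ℝ)^γ := Real.rpow_nonneg (by norm_num) _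
  have n2 : (0:ℝ) ≤ (1-x)^γ := Real.rpow_nonneg (by linarith) _
  calc (1/2:ℝ)^γ * (1/2) ≤ (1-x)^γ * phiw x :=
        mul_le_mul a1 a3 (by norm_num) n2
    _ ≤ ((1-x)^γ * phiw x) * (1+x)^δ :=
        le_mul_of_one_le_right (mul_nonneg n2 (phiw_nonneg x)) a2
    _ = jw γ δ x * phiw x := by rw [jw]; ring

/-- For `γ,δ ≥ 0`, `u = v^{γ,δ}`, the function `f(x) = x log|x|`
belongs to `Z_1(u)` (finite weighted sup norm and finite Zygmund seminorm with
`k = 2`), but `f' u φ` is unbounded on `(-1,1)`, so no inequality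
`‖f' uφ‖_∞ ≤ C ‖f‖_{Z_1(u)}` can hold. -/

theorem statement3 (γ δ : ℝ) (hγ : 0 ≤ γ) (hδ : 0 ≤ δ) :
    wnorm (jw γ δ) (fun x => x * Real.log |x|) < ⊤ ∧
    ZS 1 2 (jw γ δ) (fun x => x * Real.log |x|) < ⊤ ∧
    wnorm (fun x => jw γ δ x * phiw x) (deriv fun x => x * Real.log |x|) = ⊤ ∧
    ¬∃ C : ℝ, 0 < C ∧
        wnorm (fun x => jw γ δ x * phiw x) (deriv fun x => x * Real.log |x|) ≤
          ENNReal.ofReal C * Zn 1 (jw γ δ) (fun x => x * Real.log |x|) := by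
  have hfeq : (fun x : ℝ => x * Real.log |x|) = fun x : ℝ => x * Real.log x := by
    funext x; rw [Real.log_abs]
  rw [hfeq]
  set f : ℝ → ℝ := fun x => x * Real.log x with hf
  -- Part 1
  have part1 : wnorm (jw γ δ) f < ⊤ := by
    have hb : wnorm (jw γ δ) f ≤ ENNReal.ofReal (2^γ * 2^δ) := by
      refine iSup₂_le fun x hx => ?_
      apply ENNReal.ofReal_le_ofReal
      rw [abs_mul, abs_of_nonneg (jw_nonneg hx)]
      have h1 : |f x| ≤ 1 := xlog_le_one (abs_le.2 ⟨hx.1.le, hx.2.le⟩)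
      calc |f x| * jw γ δ x ≤ 1 * (2^γ * 2^δ) :=
            mul_le_mul h1 (jw_le hγ hδ hx) (jw_nonneg hx) one_pos.le
        _ = 2^γ * 2^δ := one_mul _
    exact lt_of_le_of_lt hb ENNReal.ofReal_lt_top
  -- Part 2
  have part2 : ZS 1 2 (jw γ δ) f < ⊤ := by
    have hb : ZS 1 2 (jw γ δ) f ≤ ENNReal.ofReal (48 * (2^γ * 2^δ)) := by
      refine iSup₂_le fun t ht => ?_
      rw [Real.rpow_one]
      apply ENNReal.div_le_of_le_mul
      rw [← ENNReal.ofReal_mul (by positivity)]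
      refine iSup₂_le fun τ hτ => iSup₂_le fun x hx => ?_
      apply ENNReal.ofReal_le_ofReal
      obtain ⟨hτ0, hτt⟩ := hτ
      have hx1 := hx.1
      have hx2 := hx.2
      push_cast at hx1 hx2
      have hxm1 : -1 < x := by nlinarith
      have hxp1 : x < 1 := by nlinarith
      have hh0 : 0 ≤ τ * phiw x := mul_nonneg hτ0.le (phiw_nonneg x)
      have hDk : |Dk 2 τ f x| ≤ 48 * t := by
        rw [Dk_two]
        have hk := key_xlog x hh0
        have hle : 48 * (τ * phiw x) ≤ 48 * t := by
          have := phiw_le_one x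
          nlinarith [phiw_nonneg x]
        calc |f (x + τ * phiw x) - 2 * f x + f (x - τ * phiw x)| ≤ 48 * (τ * phiw x) := hk
          _ ≤ 48 * t := hle
      have hux : jw γ δ x ≤ 2^γ * 2^δ := jw_le hγ hδ ⟨hxm1, hxp1⟩
      have hun : 0 ≤ jw γ δ x := jw_nonneg ⟨hxm1, hxp1⟩
      calc jw γ δ x * |Dk 2 τ f x| ≤ (2^γ * 2^δ) * (48 * t) :=
            mul_le_mul hux hDk (abs_nonneg _) (by positivity)
        _ = 48 * (2^γ * 2^δ) * t := by ring
    exact lt_of_le_of_lt hb ENNReal.ofReal_lt_top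
  -- Part 3
  have part3 : wnorm (fun x => jw γ δ x * phiw x) (deriv f) = ⊤ := by
    rw [eq_top_iff, ← ENNReal.iSup_natCast]
    refine iSup_le fun n => ?_
    set c : ℝ := (1/2:ℝ)^γ * (1/2) with hc
    have hc0 : 0 < c := by
      have : (0:ℝ) < (1/2:ℝ)^γ := Real.rpow_pos_of_pos (by norm_num) _
      positivity
    obtain ⟨m, hm⟩ := exists_nat_ge ((n:ℝ) / c)
    set x : ℝ := Real.exp (-((m:ℝ)+2)) with hxdef
    have hx0 : 0 < x := Real.exp_pos _
    have hxhalf : x ≤ 1/2 := by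
      have he1 : x ≤ Real.exp (-1) := Real.exp_le_exp.2 (by
        have : (0:ℝ) ≤ (m:ℝ) := Nat.cast_nonneg m
        linarith)
      have he2 : Real.exp (-1) ≤ 1/2 := by
        rw [Real.exp_neg]
        have h2e : (2:ℝ) ≤ Real.exp 1 := by
          have := Real.add_one_le_exp (1:ℝ); linarith
        have := inv_anti₀ (by norm_num : (0:ℝ) < 2) h2e
        simpa using this
      linarith
    have hxI : x ∈ Ioo (-1:ℝ) 1 := ⟨by linarith, by linarith⟩
    have hd : deriv f x = Real.log x + 1 := deriv_xlog (ne_of_gt hx0)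
    have hlog : Real.log x = -((m:ℝ)+2) := by rw [hxdef, Real.log_exp]
    have hwlb : c ≤ jw γ δ x * phiw x := jw_phiw_lb hγ hδ hx0 hxhalf
    have hval : (n:ℝ) ≤ |deriv f x * (jw γ δ x * phiw x)| := by
      rw [hd, hlog]
      have he : -((m:ℝ)+2) + 1 = -((m:ℝ)+1) := by ring
      rw [he, abs_mul, abs_neg, abs_of_nonneg (by positivity : (0:ℝ) ≤ (m:ℝ)+1),
        abs_of_nonneg (le_trans hc0.le hwlb)]
      have hnc : (n:ℝ) ≤ (m:ℝ) * c := by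
        rw [div_le_iff₀ hc0] at hm; linarith
      nlinarith [Nat.cast_nonneg (α := ℝ) m]
    calc ((n:ℕ) : ℝ≥0∞) = ENNReal.ofReal (n:ℝ) := (ENNReal.ofReal_natCast n).symm
      _ ≤ ENNReal.ofReal |deriv f x * (jw γ δ x * phiw x)| := ENNReal.ofReal_le_ofReal hval
      _ ≤ ⨆ y ∈ Ioo (-1:ℝ) 1, ENNReal.ofReal |deriv f y * (jw γ δ y * phiw y)| :=
          le_iSup₂_of_le x hxI (le_refl _)
  refine ⟨part1, part2, part3, ?_⟩
  rintro ⟨C, hC0, hle⟩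
  have hZn : Zn 1 (jw γ δ) f < ⊤ := by
    have h2 : ((⌊(1:ℝ)⌋ + 1).toNat) = 2 := by rw [Int.floor_one]; rfl
    rw [Zn, h2]
    exact ENNReal.add_lt_top.2 ⟨part1, part2⟩
  have hfin : ENNReal.ofReal C * Zn 1 (jw γ δ) f < ⊤ :=
    ENNReal.mul_lt_top ENNReal.ofReal_lt_top hZn
  rw [part3] at hle
  exact lt_irrefl ⊤ (lt_of_le_of_lt hle hfin)
end
end

section
/- Let 0 < α < 1, ρ = v^{α,1−α}, u = v^{γ,δ} with γ,δ ≥ 0, and let h : [−1,1]² → ℝ be measurable such that sup_{|y|<1} (uφ)(y) ∫_{−1}^1 |h(x,y)| u(x)^{−1} dx < ∞ and, for some s > 0 and C₀ > 0, A(τ) ≤ C₀ τ^s for all τ ∈ (0, 1/2], where A(τ) := sup_{y∈I_τ} (uφ)(y) ∫_{−1}^1 |h(x, y+τφ(y)/2) − h(x, y−τφ(y)/2)| u(x)^{−1} dx and I_τ := [−1+4τ², 1−4τ²]. Define (Hf)(y) := (1/π)∫_{−1}^1 h(x,y) f(x) ρ(x) dx. Then there exists C, independent of f and t, such that Ω¹_φ(Hf,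 t)_{uφ} ≤ C t^s ‖f uρ‖_∞ for every t > 0 and every f with ‖f uρ‖_∞ < ∞. -/
open Set Filter MeasureTheory intervalIntegral Polynomial
open scoped ENNReal

noncomputable section

section Aux

lemma jw_nonneg_s11 (a b : ℝ) {x : ℝ} (hx : x ∈ Icc (-1:ℝ) 1) : 0 ≤ jw a b x :=
  mul_nonneg (Real.rpow_nonneg (by linarith [hx.2]) _) (Real.rpow_nonneg (by linarith [hx.1]) _)

lemma jw_pos (a b : ℝ) {x : ℝ} (hx : x ∈ Ioo (-1:ℝ) 1) : 0 < jw a b x :=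
  mul_pos (Real.rpow_pos_of_pos (by linarith [hx.2]) _) (Real.rpow_pos_of_pos (by linarith [hx.1]) _)

lemma jw_cont {a b : ℝ} (ha : 0 ≤ a) (hb : 0 ≤ b) : Continuous (jw a b) :=
  ((Real.continuous_rpow_const ha).comp (continuous_const.sub continuous_id)).mul
    ((Real.continuous_rpow_const hb).comp (continuous_const.add continuous_id))

lemma half_lt {τ y : ℝ} (hτ : 0 < τ) (hy : y ∈ Icc (-1+4*τ^2) (1-4*τ^2)) :
    τ * phiw y / 2 < 1 - y ∧ τ * phiw y / 2 < 1 + y := by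
  obtain ⟨h1, h2⟩ := hy
  have ht2 : 0 < τ^2 := by positivity
  have hy1 : -1 < y := by nlinarith
  have hy2 : y < 1 := by nlinarith
  have hp0 : 0 ≤ phiw y := Real.sqrt_nonneg _
  have hp : phiw y ^ 2 = 1 - y^2 := Real.sq_sqrt (by nlinarith)
  constructor
  · refine lt_of_pow_lt_pow_left₀ 2 (by linarith) ?_
    have : (τ * phiw y / 2)^2 = τ^2 * (1 - y^2) / 4 := by rw [div_pow, mul_pow, hp]; norm_num
    rw [this]
    nlinarith [mul_pos ht2 (show (0:ℝ) < 1 - y by linarith)]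
  · refine lt_of_pow_lt_pow_left₀ 2 (by linarith) ?_
    have : (τ * phiw y / 2)^2 = τ^2 * (1 - y^2) / 4 := by rw [div_pow, mul_pow, hp]; norm_num
    rw [this]
    nlinarith [mul_pos ht2 (show (0:ℝ) < 1 + y by linarith)]

lemma key (α γ δ F : ℝ) (hα0 : 0 < α) (hα1 : α < 1) (hF : 0 ≤ F)
    (H f : ℝ → ℝ) (hH : Measurable H) (hf : Measurable f)
    (hfb : ∀ x ∈ Ioo (-1:ℝ) 1, |f x| * (jw γ δ x * jw α (1-α) x) ≤ F)
    (hint : IntervalIntegrable (fun x => |H x| / jw γ δ x) volume (-1) 1) :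
    IntervalIntegrable (fun x => H x * f x * jw α (1-α) x) volume (-1) 1 ∧
    |∫ x in (-1:ℝ)..1, H x * f x * jw α (1-α) x| ≤ F * ∫ x in (-1:ℝ)..1, |H x| / jw γ δ x := by
  have hDint : IntervalIntegrable (fun x => F * (|H x| / jw γ δ x)) volume (-1) 1 :=
    hint.const_mul F
  have hdom : ∀ x ∈ Icc (-1:ℝ) 1, |H x * f x * jw α (1-α) x| ≤ F * (|H x| / jw γ δ x) := by
    intro x hx
    rcases hx.1.eq_or_lt with h | h1
    · have hz : jw α (1-α) x = 0 := by
        simp [jw, ← h, Real.zero_rpow (show (1:ℝ) - α ≠ 0 by linarith)]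
      rw [hz, mul_zero, abs_zero]
      exact mul_nonneg hF (div_nonneg (abs_nonneg _) (jw_nonneg_s11 _ _ hx))
    rcases hx.2.lt_or_eq with h2 | h
    case inr =>
      have hz : jw α (1-α) x = 0 := by
        simp [jw, h, Real.zero_rpow (show α ≠ 0 by linarith)]
      rw [hz, mul_zero, abs_zero]
      exact mul_nonneg hF (div_nonneg (abs_nonneg _) (jw_nonneg_s11 _ _ hx))
    case inl =>
      have hxI : x ∈ Ioo (-1:ℝ) 1 := ⟨h1, h2⟩
      have hu : 0 < jw γ δ x := jw_pos _ _ hxI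
      have hρ : 0 ≤ jw α (1-α) x := (jw_pos _ _ hxI).le
      have h1' : |f x| * jw α (1-α) x ≤ F / jw γ δ x := by
        rw [le_div_iff₀ hu]
        nlinarith [hfb x hxI]
      calc |H x * f x * jw α (1-α) x| = |H x| * (|f x| * jw α (1-α) x) := by
            rw [abs_mul, abs_mul, abs_of_nonneg hρ, mul_assoc]
        _ ≤ |H x| * (F / jw γ δ x) := by
            exact mul_le_mul_of_nonneg_left h1' (abs_nonneg _)
        _ = F * (|H x| / jw γ δ x) := by ring
  have hmeasI : Measurable (fun x => H x * f x * jw α (1-α) x) :=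
    (hH.mul hf).mul (jw_cont (le_of_lt hα0) (by linarith)).measurable
  have hint1 : IntervalIntegrable (fun x => H x * f x * jw α (1-α) x) volume (-1) 1 := by
    refine hDint.mono_fun' hmeasI.aestronglyMeasurable.restrict ?_
    refine ae_restrict_of_forall_mem measurableSet_uIoc fun x hx => ?_
    have hx' : x ∈ Icc (-1:ℝ) 1 := by
      rw [uIoc_of_le (by norm_num : (-1:ℝ) ≤ 1)] at hx
      exact Ioc_subset_Icc_self hx
    simp only [Real.norm_eq_abs]
    exact hdom x hx'
  refine ⟨hint1, ?_⟩
  calc |∫ x in (-1:ℝ)..1, H x * f x * jw α (1-α) x|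
      ≤ ∫ x in (-1:ℝ)..1, |H x * f x * jw α (1-α) x| :=
        abs_integral_le_integral_abs (by norm_num)
    _ ≤ ∫ x in (-1:ℝ)..1, F * (|H x| / jw γ δ x) :=
        integral_mono_on (by norm_num) hint1.abs hDint hdom
    _ = F * ∫ x in (-1:ℝ)..1, |H x| / jw γ δ x := integral_const_mul _ _

end Aux

/-- Under the boundedness condition on `(uφ)(y)∫|h(x,y)|u(x)⁻¹dx`
and the smoothness condition `A(τ) ≤ C₀ τ^s` for `τ ∈ (0,1/2]`, there is `C`,
independent of `f` and `t`, with `Ω¹_φ(Hf,t)_{uφ} ≤ C t^s ‖f uρ‖_∞` for every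
`t > 0` and every `f` with `‖f uρ‖_∞ < ∞`. -/
theorem statement11 (α γ δ s C₀ B : ℝ) (hα0 : 0 < α) (hα1 : α < 1)
    (hγ : 0 ≤ γ) (hδ : 0 ≤ δ) (hs : 0 < s) (hC₀ : 0 < C₀)
    (h : ℝ → ℝ → ℝ) (hmeas : Measurable (Function.uncurry h))
    (hB : ∀ y ∈ Ioo (-1 : ℝ) 1,
      IntervalIntegrable (fun x => |h x y| / jw γ δ x) MeasureTheory.volume (-1) 1 ∧
      (jw γ δ y * phiw y) * ∫ x in (-1 : ℝ)..1, |h x y| / jw γ δ x ≤ B)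
    (hA : ∀ τ ∈ Ioc (0 : ℝ) (1 / 2), ∀ y ∈ Icc (-1 + 4 * τ ^ 2) (1 - 4 * τ ^ 2),
      IntervalIntegrable
          (fun x => |h x (y + τ * phiw y / 2) - h x (y - τ * phiw y / 2)| / jw γ δ x)
          MeasureTheory.volume (-1) 1 ∧
      (jw γ δ y * phiw y) *
          ∫ x in (-1 : ℝ)..1,
            |h x (y + τ * phiw y / 2) - h x (y - τ * phiw y / 2)| / jw γ δ x ≤
        C₀ * τ ^ s) :
    ∃ C : ℝ, 0 < C ∧ ∀ (f : ℝ → ℝ) (F : ℝ), Measurable f → 0 ≤ F →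
      (∀ x ∈ Ioo (-1 : ℝ) 1, |f x| * (jw γ δ x * jw α (1 - α) x) ≤ F) →
      ∀ t : ℝ, 0 < t →
        Om 1 (fun x => jw γ δ x * phiw x)
            (fun y => (1 / Real.pi) * ∫ x in (-1 : ℝ)..1, h x y * f x * jw α (1 - α) x) t ≤
          ENNReal.ofReal (C * t ^ s * F) := by
  have hπ : 0 < Real.pi := Real.pi_pos
  refine ⟨C₀ / Real.pi, by positivity, ?_⟩
  intro f F hfm hF hfb t ht
  set ρ : ℝ → ℝ := jw α (1 - α) with hρdef
  set u : ℝ → ℝ := jw γ δ with hudef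
  refine iSup₂_le fun τ hτ => iSup₂_le fun y hy => ?_
  have hsq : (2 * ((1:ℕ):ℝ) * τ) ^ 2 = 4 * τ ^ 2 := by push_cast; ring
  rw [hsq] at hy
  obtain ⟨hy1, hy2⟩ := hy
  have hτ0 : 0 < τ := hτ.1
  have hτhalf : τ ≤ 1 / 2 := by nlinarith
  have hy' : y ∈ Icc (-1 + 4 * τ ^ 2) (1 - 4 * τ ^ 2) := ⟨hy1, hy2⟩
  have hyIoo : y ∈ Ioo (-1 : ℝ) 1 := ⟨by nlinarith, by nlinarith⟩
  obtain ⟨hlt1, hlt2⟩ := half_lt hτ0 hy'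
  have hp0 : 0 ≤ phiw y := Real.sqrt_nonneg _
  have hc0 : 0 ≤ τ * phiw y / 2 := by positivity
  have hyp : y + τ * phiw y / 2 ∈ Ioo (-1 : ℝ) 1 := ⟨by linarith [hyIoo.1], by linarith⟩
  have hym : y - τ * phiw y / 2 ∈ Ioo (-1 : ℝ) 1 := ⟨by linarith, by linarith [hyIoo.2]⟩
  -- measurability of sections
  have hsec : ∀ z : ℝ, Measurable fun x => h x z := fun z =>
    hmeas.comp (measurable_id.prodMk measurable_const)
  -- integrability of the two pieces
  obtain ⟨hIp, -⟩ := key α γ δ F hα0 hα1 hF (fun x => h x (y + τ * phiw y / 2)) f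
    (hsec _) hfm hfb (hB _ hyp).1
  obtain ⟨hIm, -⟩ := key α γ δ F hα0 hα1 hF (fun x => h x (y - τ * phiw y / 2)) f
    (hsec _) hfm hfb (hB _ hym).1
  obtain ⟨hAint, hAbd⟩ := hA τ ⟨hτ0, hτhalf⟩ y hy'
  obtain ⟨-, hdiffbd⟩ := key α γ δ F hα0 hα1 hF
    (fun x => h x (y + τ * phiw y / 2) - h x (y - τ * phiw y / 2)) f
    ((hsec _).sub (hsec _)) hfm hfb hAint
  set g : ℝ → ℝ := fun z => (1 / Real.pi) * ∫ x in (-1:ℝ)..1, h x z * f x * ρ x with hgdef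
  have hDk : Dk 1 τ g y = g (y + τ * phiw y / 2) - g (y - τ * phiw y / 2) := by
    simp [Dk, Finset.sum_range_succ]
    norm_num
    ring_nf
  have hsub : g (y + τ * phiw y / 2) - g (y - τ * phiw y / 2) =
      (1 / Real.pi) * ∫ x in (-1:ℝ)..1,
        (h x (y + τ * phiw y / 2) - h x (y - τ * phiw y / 2)) * f x * ρ x := by
    rw [hgdef]
    simp only
    rw [← mul_sub, ← intervalIntegral.integral_sub hIp hIm]
    congr 1
    apply intervalIntegral.integral_congr
    intro x _
    ring
  have huφ : 0 ≤ u y * phiw y :=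
    mul_nonneg (jw_nonneg_s11 _ _ (Ioo_subset_Icc_self hyIoo)) hp0
  have hτs : τ ^ s ≤ t ^ s := Real.rpow_le_rpow hτ0.le hτ.2 hs.le
  refine ENNReal.ofReal_le_ofReal ?_
  have hInt0 : 0 ≤ ∫ x in (-1:ℝ)..1,
      |h x (y + τ * phiw y / 2) - h x (y - τ * phiw y / 2)| / jw γ δ x := by
    apply intervalIntegral.integral_nonneg (by norm_num)
    intro x hx
    exact div_nonneg (abs_nonneg _) (jw_nonneg_s11 _ _ hx)
  have hchain : u y * phiw y * |Dk 1 τ g y| ≤ C₀ / Real.pi * τ ^ s * F := by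
    rw [hDk, hsub, abs_mul]
    have hπabs : |1 / Real.pi| = 1 / Real.pi := abs_of_pos (by positivity)
    rw [hπabs]
    have step1 : u y * phiw y *
        (1 / Real.pi * |∫ x in (-1:ℝ)..1,
          (h x (y + τ * phiw y / 2) - h x (y - τ * phiw y / 2)) * f x * ρ x|) ≤
        1 / Real.pi * (F * (u y * phiw y * ∫ x in (-1:ℝ)..1,
          |h x (y + τ * phiw y / 2) - h x (y - τ * phiw y / 2)| / jw γ δ x)) := by
      have t1 := mul_le_mul_of_nonneg_left (mul_le_mul_of_nonneg_left hdiffbd huφ)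
        (le_of_lt (show (0:ℝ) < 1 / Real.pi by positivity))
      calc u y * phiw y *
            (1 / Real.pi * |∫ x in (-1:ℝ)..1,
              (h x (y + τ * phiw y / 2) - h x (y - τ * phiw y / 2)) * f x * ρ x|)
          = 1 / Real.pi * (u y * phiw y * |∫ x in (-1:ℝ)..1,
              (h x (y + τ * phiw y / 2) - h x (y - τ * phiw y / 2)) * f x * ρ x|) := by ring
        _ ≤ 1 / Real.pi * (u y * phiw y * (F * ∫ x in (-1:ℝ)..1,
              |h x (y + τ * phiw y / 2) - h x (y - τ * phiw y / 2)| / jw γ δ x)) := t1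
        _ = 1 / Real.pi * (F * (u y * phiw y * ∫ x in (-1:ℝ)..1,
              |h x (y + τ * phiw y / 2) - h x (y - τ * phiw y / 2)| / jw γ δ x)) := by ring
    refine step1.trans ?_
    have step2 : u y * phiw y * ∫ x in (-1:ℝ)..1,
        |h x (y + τ * phiw y / 2) - h x (y - τ * phiw y / 2)| / jw γ δ x ≤ C₀ * τ ^ s :=
      hAbd
    have : F * (u y * phiw y * ∫ x in (-1:ℝ)..1,
        |h x (y + τ * phiw y / 2) - h x (y - τ * phiw y / 2)| / jw γ δ x) ≤ F * (C₀ * τ ^ s) :=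
      mul_le_mul_of_nonneg_left step2 hF
    calc 1 / Real.pi * (F * (u y * phiw y * ∫ x in (-1:ℝ)..1,
          |h x (y + τ * phiw y / 2) - h x (y - τ * phiw y / 2)| / jw γ δ x))
        ≤ 1 / Real.pi * (F * (C₀ * τ ^ s)) := by
          exact mul_le_mul_of_nonneg_left this (by positivity)
      _ = C₀ / Real.pi * τ ^ s * F := by ring
  refine hchain.trans ?_
  have hts0 : 0 ≤ τ ^ s := Real.rpow_nonneg hτ0.le s
  have : C₀ / Real.pi * τ ^ s * F ≤ C₀ / Real.pi * t ^ s * F := by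
    have h1 : C₀ / Real.pi * τ ^ s ≤ C₀ / Real.pi * t ^ s :=
      mul_le_mul_of_nonneg_left hτs (by positivity)
    exact mul_le_mul_of_nonneg_right h1 hF
  exact this
end
end

section
/- Let γ,δ ≥ 0, u = v^{γ,δ}. Let σ : (−1,1) → ℝ be such that σφ extends to a continuous function on [−1,1], and let f : (−1,1) → ℝ with ‖f uφ‖_∞ < ∞. Then for every integer m ≥ 1, E_m(σφ·f)_{uφ} ≤ ‖σφ‖_∞ · E_{⌊m/2⌋}(f)_{uφ} + 2‖f uφ‖_∞ · E_{⌊m/2⌋}(σφ), where E_{⌊m/2⌋}(σφ) denotes the error of best uniform (unweighted) polynomial approximation of σφ on [−1,1] by polynomials of degree at most ⌊m/2⌋. -/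
open Set Filter MeasureTheory intervalIntegral Polynomial
open scoped ENNReal

noncomputable section

private lemma auxInf13 {ι : Sort*} [Nonempty ι] (f : ι → ℝ≥0∞) (a b : ℝ≥0∞) (ha : a ≠ ⊤) :
    a * iInf f + b = ⨅ i, (a * f i + b) := by
  rw [ENNReal.mul_iInf' (by simp [ha]) (fun _ => inferInstance), ENNReal.iInf_add]

/-- If `σφ` extends continuously to `[-1,1]`, `‖σφ‖_∞ ≤ Ms` and
`‖f uφ‖_∞ ≤ F`, then for every `m ≥ 1`,
`E_m(σφ·f)_{uφ} ≤ Ms · E_{⌊m/2⌋}(f)_{uφ} + 2F · E_{⌊m/2⌋}(σφ)`,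
the last error being unweighted best uniform approximation on `[-1,1]`. -/
theorem statement13 (γ δ : ℝ) (hγ : 0 ≤ γ) (hδ : 0 ≤ δ) (σ f : ℝ → ℝ)
    (hσc : ContinuousOn (fun x => σ x * phiw x) (Icc (-1 : ℝ) 1))
    (Ms F : ℝ)
    (hMs : ∀ x ∈ Icc (-1 : ℝ) 1, |σ x * phiw x| ≤ Ms)
    (hF : ∀ x ∈ Ioo (-1 : ℝ) 1, |f x * (jw γ δ x * phiw x)| ≤ F)
    (m : ℕ) (hm : 1 ≤ m) :
    Eerr m (fun x => jw γ δ x * phiw x) (fun x => σ x * phiw x * f x) ≤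
      ENNReal.ofReal Ms * Eerr (m / 2) (fun x => jw γ δ x * phiw x) f +
        ENNReal.ofReal (2 * F) * EerrI (m / 2) (fun x => σ x * phiw x) := by
  set u : ℝ → ℝ := fun x => jw γ δ x * phiw x with hu
  have hMs0 : 0 ≤ Ms := le_trans (abs_nonneg _) (hMs 0 (by norm_num))
  have hF0 : 0 ≤ F := le_trans (abs_nonneg _) (hF 0 (by norm_num))
  set S : ℝ[X] → ℝ≥0∞ :=
    fun Q => ⨆ x ∈ Icc (-1 : ℝ) 1, ENNReal.ofReal |σ x * phiw x - Q.eval x| with hS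
  set W : ℝ[X] → ℝ≥0∞ := fun P => wnorm u (fun x => f x - P.eval x) with hW
  set Ef : ℝ≥0∞ := Eerr (m / 2) u f with hEf
  -- Ef ≤ ofReal F
  have hEfF : Ef ≤ ENNReal.ofReal F := by
    rw [hEf, Eerr]
    refine le_trans (iInf₂_le 0 (by simp)) ?_
    rw [wnorm]
    refine iSup₂_le fun x hx => ?_
    simp only [Polynomial.eval_zero, sub_zero]
    exact ENNReal.ofReal_le_ofReal (hF x hx)
  rcases eq_or_lt_of_le hF0 with hF0' | hFpos
  · -- F = 0 : then f·u = 0 on Ioo and LHS = 0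
    refine le_trans ?_ zero_le
    rw [Eerr]
    refine le_trans (iInf₂_le 0 (by simp)) (le_of_eq ?_)
    rw [wnorm]
    refine le_antisymm (iSup₂_le fun x hx => ?_) zero_le
    have h0 : f x * u x = 0 := by
      have := hF x hx
      rw [← hF0'] at this
      exact abs_eq_zero.mp (le_antisymm this (abs_nonneg _))
    simp only [Polynomial.eval_zero, sub_zero]
    have : σ x * phiw x * f x * u x = σ x * phiw x * (f x * u x) := by ring
    rw [this, h0, mul_zero, abs_zero, ENNReal.ofReal_zero]
  -- main case F > 0
  have key : ∀ Q : ℝ[X], Q.natDegree ≤ m / 2 → ∀ P : ℝ[X], P.natDegree ≤ m / 2 →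
      Eerr m u (fun x => σ x * phiw x * f x) ≤
        (ENNReal.ofReal Ms + S Q) * W P + S Q * ENNReal.ofReal F := by
    intro Q hQ P hP
    have hdeg : (Q * P).natDegree ≤ m := by
      refine le_trans (Polynomial.natDegree_mul_le) ?_
      omega
    rw [Eerr]
    refine le_trans (iInf₂_le (Q * P) hdeg) ?_
    rw [wnorm]
    refine iSup₂_le fun x hx => ?_
    have hxI : x ∈ Icc (-1 : ℝ) 1 := Ioo_subset_Icc_self hx
    have hreal : |(σ x * phiw x * f x - (Q * P).eval x) * u x| ≤
        |σ x * phiw x| * |(f x - P.eval x) * u x| +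
          |σ x * phiw x - Q.eval x| * (|f x * u x| + |(f x - P.eval x) * u x|) := by
      rw [Polynomial.eval_mul]
      have he : (σ x * phiw x * f x - Q.eval x * P.eval x) * u x =
          (σ x * phiw x) * ((f x - P.eval x) * u x) +
            (σ x * phiw x - Q.eval x) * (P.eval x * u x) := by ring
      rw [he]
      refine le_trans (abs_add_le _ _) ?_
      rw [abs_mul (σ x * phiw x), abs_mul (σ x * phiw x - Q.eval x)]
      refine add_le_add le_rfl (mul_le_mul_of_nonneg_left ?_ (abs_nonneg _))
      have hp : P.eval x * u x = f x * u x - (f x - P.eval x) * u x := by ring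
      rw [hp]
      exact abs_sub _ _
    calc ENNReal.ofReal |(σ x * phiw x * f x - (Q * P).eval x) * u x|
        ≤ ENNReal.ofReal (|σ x * phiw x| * |(f x - P.eval x) * u x| +
            |σ x * phiw x - Q.eval x| * (|f x * u x| + |(f x - P.eval x) * u x|)) :=
          ENNReal.ofReal_le_ofReal hreal
      _ = ENNReal.ofReal |σ x * phiw x| * ENNReal.ofReal |(f x - P.eval x) * u x| +
            ENNReal.ofReal |σ x * phiw x - Q.eval x| *
              (ENNReal.ofReal |f x * u x| + ENNReal.ofReal |(f x - P.eval x) * u x|) := by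
          rw [ENNReal.ofReal_add (by positivity) (by positivity),
            ENNReal.ofReal_mul (abs_nonneg _), ENNReal.ofReal_mul (abs_nonneg _),
            ENNReal.ofReal_add (abs_nonneg _) (abs_nonneg _)]
      _ ≤ ENNReal.ofReal Ms * W P + S Q * (ENNReal.ofReal F + W P) := by
          have h1 : ENNReal.ofReal |σ x * phiw x| ≤ ENNReal.ofReal Ms :=
            ENNReal.ofReal_le_ofReal (hMs x hxI)
          have h2 : ENNReal.ofReal |(f x - P.eval x) * u x| ≤ W P := by
            simp only [hW, wnorm]
            exact le_iSup₂ (f := fun y (_ : y ∈ Ioo (-1 : ℝ) 1) =>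
              ENNReal.ofReal |(f y - P.eval y) * u y|) x hx
          have h3 : ENNReal.ofReal |σ x * phiw x - Q.eval x| ≤ S Q := by
            simp only [hS]
            exact le_iSup₂ (f := fun y (_ : y ∈ Icc (-1 : ℝ) 1) =>
              ENNReal.ofReal |σ y * phiw y - Q.eval y|) x hxI
          have h4 : ENNReal.ofReal |f x * u x| ≤ ENNReal.ofReal F :=
            ENNReal.ofReal_le_ofReal (hF x hx)
          exact add_le_add (mul_le_mul' h1 h2) (mul_le_mul' h3 (add_le_add h4 h2))
      _ = (ENNReal.ofReal Ms + S Q) * W P + S Q * ENNReal.ofReal F := by ring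
  -- lemma A : for each admissible Q
  have lemA : ∀ Q : ℝ[X], Q.natDegree ≤ m / 2 →
      Eerr m u (fun x => σ x * phiw x * f x) ≤
        ENNReal.ofReal Ms * Ef + ENNReal.ofReal (2 * F) * S Q := by
    intro Q hQ
    rcases eq_or_ne (S Q) ⊤ with hSt | hSt
    · rw [hSt, ENNReal.mul_top (by simp [hFpos])]
      exact le_trans le_top (le_add_self)
    have hane : ENNReal.ofReal Ms + S Q ≠ ⊤ := by
      simp [ENNReal.add_ne_top, hSt]
    haveI : Nonempty {P : ℝ[X] // P.natDegree ≤ m / 2} := ⟨⟨0, by simp⟩⟩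
    have hEfsub : Ef = ⨅ P : {P : ℝ[X] // P.natDegree ≤ m / 2}, W P.1 := by
      rw [hEf, Eerr, iInf_subtype']
    have step1 : Eerr m u (fun x => σ x * phiw x * f x) ≤
        (ENNReal.ofReal Ms + S Q) * Ef + S Q * ENNReal.ofReal F := by
      rw [hEfsub, auxInf13 _ _ _ hane]
      exact le_iInf fun P => key Q hQ P.1 P.2
    refine le_trans step1 ?_
    have hSE : S Q * Ef ≤ S Q * ENNReal.ofReal F := mul_le_mul' le_rfl hEfF
    calc (ENNReal.ofReal Ms + S Q) * Ef + S Q * ENNReal.ofReal F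
        = ENNReal.ofReal Ms * Ef + (S Q * Ef + S Q * ENNReal.ofReal F) := by ring
      _ ≤ ENNReal.ofReal Ms * Ef + (S Q * ENNReal.ofReal F + S Q * ENNReal.ofReal F) := by
          exact add_le_add le_rfl (add_le_add hSE le_rfl)
      _ = ENNReal.ofReal Ms * Ef + ENNReal.ofReal (2 * F) * S Q := by
          rw [ENNReal.ofReal_mul (by norm_num)]
          have : (ENNReal.ofReal 2 : ℝ≥0∞) = 2 := by
            simp [ENNReal.ofReal_ofNat]
          rw [this]; ring
  -- assemble over Q
  haveI : Nonempty {Q : ℝ[X] // Q.natDegree ≤ m / 2} := ⟨⟨0, by simp⟩⟩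
  have hEsub : EerrI (m / 2) (fun x => σ x * phiw x) =
      ⨅ Q : {Q : ℝ[X] // Q.natDegree ≤ m / 2}, S Q.1 := by
    rw [EerrI, iInf_subtype']
  rw [hEsub, ENNReal.mul_iInf' (by intro h; exact absurd h ENNReal.ofReal_ne_top) (fun _ => inferInstance),
    ENNReal.add_iInf]
  exact le_iInf fun Q => lemA Q.1 Q.2
end
end
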